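/- Let N ≥ 1, 1 ≤ S ≤ N, o ∈ ℝ^N, and let O := Σ_{k=1}^N o_k Z_k, where Z_k is the N-qubit Pauli operator acting as Z on qubit k and as identity on all other qubits. Let Q be a nonempty finite collection of subsets of {1,…,N}, each of size S. For a subset s ⊆ {1,…,N} and a function h: s → {1,2,3}, let σ_h^s denote the N-qubit Pauli operator acting as σ_{h(q)} on each qubit q ∈ s and as identity elsewhere. Let ρ₁,…,ρ_m ∈ M_{2^N}(ℂ) be Hermitian with trace one. Define K_∞ ∈ ℝ^{m×m} by [K_∞]_{aa'} := (1/(3^S·|Q|))·Σ_{s ∈ Q} Σ_{h: s→{1,2,3}} (1/4)·Tr[i[O, σ_h^s]ρ_a]·Tr[i[O, σ_h^s]ρ_{a'}]. For w ∈ {0,1,…,S−1}, let A_{Q,w} be the real matrix with rows indexed by pairs (s, p) with s ∈ Q and p: s → {1,2,3} taking the value 3 exactly w times, and with entries [A_{Q,w}]_{(s,p),a} := Tr[σ_p^s ρ_a]. Then, in the semidefinite (Loewner) order on real symmetric m×m matrices, (1/(3^S·|Q|))·Σ_{w=0}^{S−1} (Σ_{k=1}^N |o_k|)²·A_{Q,w}ᵀA_{Q,w}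 ≽ K_∞ ≽ (1/(3^S·|Q|))·Σ_{w=0}^{S−1} Δ_{S−w}·A_{Q,w}ᵀA_{Q,w}, where Δ_j := min{(gᵀo)² : g ∈ {0,−1,1}^N, 1 ≤ ‖g‖₁ ≤ j}. -/

import Mathlib

open Matrix

/-- The single-qubit Pauli matrices `σ₀ = I, σ₁ = X, σ₂ = Y, σ₃ = Z`. -/
noncomputable def pauli : Fin 4 → Matrix (Fin 2) (Fin 2) ℂ :=
  ![1, !![0, 1; 1, 0], !![0, -Complex.I; Complex.I, 0], !![1, 0; 0, -1]]

/-- The `N`-qubit Pauli string `σ_i = σ_{i₁} ⊗ ⋯ ⊗ σ_{i_N}`, as a matrix on `ℂ^{2^N}`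
(whose index set is realized as `Fin N → Fin 2`). -/
noncomputable def pauliString (N : ℕ) (i : Fin N → Fin 4) :
    Matrix (Fin N → Fin 2) (Fin N → Fin 2) ℂ :=
  Matrix.of fun v w => ∏ n : Fin N, pauli (i n) (v n) (w n)

/-- The Pauli operator `σ_h^s` acting as `σ_{h(q)}` (a letter in `{1,2,3} = {X,Y,Z}`)
on each qubit `q ∈ s` and as identity elsewhere. -/
noncomputable def subsetPauliXYZ (N : ℕ) (s : Finset (Fin N)) (h : {q // q ∈ s} → Fin 3) :
    Matrix (Fin N → Fin 2) (Fin N → Fin 2) ℂ :=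
  pauliString N (fun q => if hq : q ∈ s then (h ⟨q, hq⟩).succ else 0)

/-- The observable `O = Σ_k o_k Z_k`, where `Z_k` acts as `Z` on qubit `k` and as
identity elsewhere. -/
noncomputable def zObservable (N : ℕ) (o : Fin N → ℝ) :
    Matrix (Fin N → Fin 2) (Fin N → Fin 2) ℂ :=
  ∑ k : Fin N, (o k : ℂ) • pauliString N (fun q => if q = k then 3 else 0)

/-- `Δ_j = min{(gᵀo)² : g ∈ {0,−1,1}^N, 1 ≤ ‖g‖₁ ≤ j}`. -/
noncomputable def deltaMin (N : ℕ) (o : Fin N → ℝ) (j : ℕ) : ℝ :=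
  sInf {t : ℝ | ∃ g : Fin N → ℝ, (∀ i, g i = 0 ∨ g i = 1 ∨ g i = -1) ∧
    1 ≤ ∑ i, |g i| ∧ ∑ i, |g i| ≤ (j : ℝ) ∧ t = (∑ i, g i * o i) ^ 2}

/-- The asymptotic QNTK at `θ = 0` for gate Hamiltonians drawn uniformly from the Pauli
strings in `{X,Y,Z}^{⊗S}` supported on a uniformly random set from `Q`:
`[K_∞]_{aa'} = (1/(3^S·|Q|))·Σ_{s∈Q} Σ_{h:s→{1,2,3}}
   (1/4)·Tr[i[O,σ_h^s]ρ_a]·Tr[i[O,σ_h^s]ρ_{a'}]`. -/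
noncomputable def asympQNTKxyz (N S m : ℕ) (o : Fin N → ℝ) (Q : Finset (Finset (Fin N)))
    (ρ : Fin m → Matrix (Fin N → Fin 2) (Fin N → Fin 2) ℂ) : Matrix (Fin m) (Fin m) ℝ :=
  Matrix.of fun a a' => (1 / ((3 : ℝ) ^ S * Q.card)) *
    ∑ s ∈ Q, ∑ h : {q // q ∈ s} → Fin 3, (1 / 4 : ℝ) *
      (((Complex.I • (zObservable N o * subsetPauliXYZ N s h
            - subsetPauliXYZ N s h * zObservable N o)) * ρ a).trace.re *
        ((Complex.I • (zObservable N o * subsetPauliXYZ N s h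
            - subsetPauliXYZ N s h * zObservable N o)) * ρ a').trace.re)

/-- The Gram matrix `A_{Q,w}ᵀA_{Q,w}` of the coefficient matrix whose rows are indexed
by pairs `(s, p)` with `s ∈ Q` and `p : s → {1,2,3}` taking the letter `Z` exactly `w`
times, with entries `[A_{Q,w}]_{(s,p),a} = Tr[σ_p^s ρ_a]`. -/
noncomputable def pauliGramW (N m : ℕ) (Q : Finset (Finset (Fin N))) (w : ℕ)
    (ρ : Fin m → Matrix (Fin N → Fin 2) (Fin N → Fin 2) ℂ) : Matrix (Fin m) (Fin m) ℝ :=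
  Matrix.of fun a a' => ∑ s ∈ Q, ∑ p : {q // q ∈ s} → Fin 3,
    (if (Finset.univ.filter fun q => p q = 2).card = w then
      (subsetPauliXYZ N s p * ρ a).trace.re * (subsetPauliXYZ N s p * ρ a').trace.re
    else 0)

def csign : Fin 4 → ℂ := ![0, -2, 2, 0]

def cflip : Fin 4 → Fin 4 := ![0, 2, 1, 3]

lemma pauli_single_comm (c : Fin 4) :
    Complex.I • (pauli 3 * pauli c - pauli c * pauli 3) = csign c • pauli (cflip c) := by
  fin_cases c <;>
  · ext i j
    fin_cases i <;> fin_cases j <;>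
      simp [pauli, csign, cflip, Matrix.mul_apply, Fin.sum_univ_two, Complex.ext_iff] <;> norm_num

lemma pauliString_mul (N : ℕ) (i j : Fin N → Fin 4) :
    pauliString N i * pauliString N j =
      Matrix.of fun v w => ∏ n, (pauli (i n) * pauli (j n)) (v n) (w n) := by
  ext v w
  simp only [Matrix.mul_apply, pauliString, Matrix.of_apply]
  rw [Finset.prod_univ_sum, ← Fintype.piFinset_univ]
  exact Finset.sum_congr rfl fun u _ => (Finset.prod_mul_distrib).symm

lemma pauli_zero : pauli 0 = 1 := rfl

lemma comm_single (N : ℕ) (k : Fin N) (e : Fin N → Fin 4) :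
    Complex.I • (pauliString N (fun q => if q = k then 3 else 0) * pauliString N e
      - pauliString N e * pauliString N (fun q => if q = k then 3 else 0))
      = csign (e k) • pauliString N (Function.update e k (cflip (e k))) := by
  rw [pauliString_mul, pauliString_mul]
  ext v w
  simp only [Matrix.smul_apply, Matrix.sub_apply, Matrix.of_apply, pauliString, smul_eq_mul]
  have key := congrArg (fun M : Matrix (Fin 2) (Fin 2) ℂ => M (v k) (w k)) (pauli_single_comm (e k))
  simp only [Matrix.smul_apply, Matrix.sub_apply, smul_eq_mul] at key
  rw [← Finset.mul_prod_erase Finset.univ _ (Finset.mem_univ k),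
      ← Finset.mul_prod_erase Finset.univ _ (Finset.mem_univ k),
      ← Finset.mul_prod_erase Finset.univ
        (fun n => pauli (Function.update e k (cflip (e k)) n) (v n) (w n)) (Finset.mem_univ k)]
  have h1 : ∀ n ∈ Finset.univ.erase k,
      (pauli (if n = k then 3 else 0) * pauli (e n)) (v n) (w n) = pauli (e n) (v n) (w n) := by
    intro n hn
    rw [if_neg (Finset.ne_of_mem_erase hn), pauli_zero, one_mul]
  have h2 : ∀ n ∈ Finset.univ.erase k,
      (pauli (e n) * pauli (if n = k then 3 else 0)) (v n) (w n) = pauli (e n) (v n) (w n) := by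
    intro n hn
    rw [if_neg (Finset.ne_of_mem_erase hn), pauli_zero, mul_one]
  have h3 : ∀ n ∈ Finset.univ.erase k,
      pauli (Function.update e k (cflip (e k)) n) (v n) (w n) = pauli (e n) (v n) (w n) := by
    intro n hn
    rw [Function.update_of_ne (Finset.ne_of_mem_erase hn)]
  rw [Finset.prod_congr rfl h1, Finset.prod_congr rfl h2, Finset.prod_congr rfl h3,
      if_pos rfl, Function.update_self]
  linear_combination (∏ n ∈ Finset.univ.erase k, pauli (e n) (v n) (w n)) * key

def sgn3 : Fin 3 → ℝ := ![-1, 1, 0]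

def flip3 : Fin 3 → Fin 3 := ![1, 0, 2]

lemma csign_succ (j : Fin 3) : csign j.succ = ((2 * sgn3 j : ℝ) : ℂ) := by
  fin_cases j <;> norm_num [csign, sgn3] <;> rfl

lemma cflip_succ (j : Fin 3) : cflip j.succ = (flip3 j).succ := by
  fin_cases j <;> rfl

lemma comm_expand (N : ℕ) (o : Fin N → ℝ) (s : Finset (Fin N)) (h : {q // q ∈ s} → Fin 3) :
    Complex.I • (zObservable N o * subsetPauliXYZ N s h
        - subsetPauliXYZ N s h * zObservable N o)
      = ∑ k : {q // q ∈ s}, ((2 * sgn3 (h k) * o k.val : ℝ) : ℂ) •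
          subsetPauliXYZ N s (Function.update h k (flip3 (h k))) := by
  classical
  set e : Fin N → Fin 4 := fun q => if hq : q ∈ s then (h ⟨q, hq⟩).succ else 0 with he
  have hsub : zObservable N o * subsetPauliXYZ N s h - subsetPauliXYZ N s h * zObservable N o
      = ∑ k : Fin N, (o k : ℂ) •
          (pauliString N (fun q => if q = k then 3 else 0) * pauliString N e
            - pauliString N e * pauliString N (fun q => if q = k then 3 else 0)) := by
    simp [zObservable, subsetPauliXYZ, Matrix.sum_mul, Matrix.mul_sum, Matrix.smul_mul,
      Matrix.mul_smul, smul_sub, ← Finset.sum_sub_distrib, he]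
  rw [hsub, Finset.smul_sum]
  have hterm : ∀ k : Fin N, Complex.I • ((o k : ℂ) •
      (pauliString N (fun q => if q = k then 3 else 0) * pauliString N e
        - pauliString N e * pauliString N (fun q => if q = k then 3 else 0)))
      = (o k : ℂ) • (csign (e k) • pauliString N (Function.update e k (cflip (e k)))) := by
    intro k
    rw [smul_comm, comm_single]
  rw [Finset.sum_congr rfl fun k _ => hterm k]
  rw [← Finset.sum_subset (Finset.subset_univ s) (fun k _ hk => by
    have : e k = 0 := dif_neg hk
    simp [this, csign])]
  rw [← Finset.sum_attach s (fun k => (o k : ℂ) •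
      (csign (e k) • pauliString N (Function.update e k (cflip (e k)))))]
  rw [Finset.univ_eq_attach]
  refine Finset.sum_congr rfl fun k _ => ?_
  have hek : e k.val = (h k).succ := by
    rw [he]; simp only [dif_pos k.prop]
  have hpat : Function.update e k.val (cflip (e k.val))
      = fun q => if hq : q ∈ s then ((Function.update h k (flip3 (h k))) ⟨q, hq⟩).succ else 0 := by
    funext q
    by_cases hq : q ∈ s
    · by_cases hqk : q = k.val
      · have hq' : (⟨q, hq⟩ : {q // q ∈ s}) = k := Subtype.ext hqk
        rw [dif_pos hq, hq', Function.update_self]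
        rw [hqk, Function.update_self, hek, cflip_succ]
      · rw [Function.update_of_ne hqk, dif_pos hq, he]
        simp only [dif_pos hq]
        congr 1
        rw [Function.update_of_ne (fun hh => hqk (congrArg Subtype.val hh))]
    · have hqk : q ≠ k.val := fun hh => hq (hh ▸ k.prop)
      rw [Function.update_of_ne hqk, he]
      simp only [dif_neg hq]
  rw [hpat, smul_smul, hek, csign_succ, subsetPauliXYZ]
  congr 1
  push_cast
  ring

lemma trace_comm_re (N : ℕ) (o : Fin N → ℝ) (s : Finset (Fin N)) (h : {q // q ∈ s} → Fin 3)
    (ρ : Matrix (Fin N → Fin 2) (Fin N → Fin 2) ℂ) :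
    ((Complex.I • (zObservable N o * subsetPauliXYZ N s h
        - subsetPauliXYZ N s h * zObservable N o)) * ρ).trace.re
      = ∑ k : {q // q ∈ s}, 2 * sgn3 (h k) * o k.val *
          (subsetPauliXYZ N s (Function.update h k (flip3 (h k))) * ρ).trace.re := by
  rw [comm_expand, Matrix.sum_mul, Matrix.trace_sum, Complex.re_sum]
  refine Finset.sum_congr rfl fun k _ => ?_
  rw [Matrix.smul_mul, Matrix.trace_smul, smul_eq_mul, Complex.re_ofReal_mul]

noncomputable def ev3 : Fin 3 → Fin 3 → ℂ :=
  ![![1, -Complex.I, 0], ![1, Complex.I, 0], ![0, 0, 1 + Complex.I]]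

def lamsgn : Fin 3 → ℝ := ![1, -1, 0]

lemma ev3_complete (a b : Fin 3) :
    ∑ c : Fin 3, (starRingEnd ℂ) (ev3 c a) * ev3 c b = if a = b then 2 else 0 := by
  fin_cases a <;> fin_cases b <;>
    simp [ev3, Fin.sum_univ_three, Complex.ext_iff] <;> norm_num

lemma ev3_eigen (c b : Fin 3) :
    (sgn3 (flip3 b) : ℂ) * (starRingEnd ℂ) (ev3 c (flip3 b))
      = Complex.I * (lamsgn c : ℝ) * (starRingEnd ℂ) (ev3 c b) := by
  fin_cases c <;> fin_cases b <;>
    simp [ev3, sgn3, flip3, lamsgn, Complex.ext_iff] <;> norm_num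

lemma ev3_eq_zero {c b : Fin 3} (h : ¬(c = 2 ↔ b = 2)) : ev3 c b = 0 := by
  fin_cases c <;> fin_cases b <;> simp_all [ev3]

section Fourier

variable {ι : Type*} [Fintype ι] [DecidableEq ι]

noncomputable def wv (χ h : ι → Fin 3) : ℂ := ∏ k, ev3 (χ k) (h k)

lemma wv_complete (h h' : ι → Fin 3) :
    ∑ χ : ι → Fin 3, (starRingEnd ℂ) (wv χ h) * wv χ h'
      = if h = h' then (2 : ℂ) ^ Fintype.card ι else 0 := by
  have step : ∀ χ : ι → Fin 3, (starRingEnd ℂ) (wv χ h) * wv χ h'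
      = ∏ k, ((starRingEnd ℂ) (ev3 (χ k) (h k)) * ev3 (χ k) (h' k)) := by
    intro χ; rw [wv, wv, map_prod, ← Finset.prod_mul_distrib]
  rw [Finset.sum_congr rfl fun χ _ => step χ, ← Fintype.piFinset_univ,
    ← Finset.prod_univ_sum (fun _ : ι => (Finset.univ : Finset (Fin 3)))
      (fun k c => (starRingEnd ℂ) (ev3 c (h k)) * ev3 c (h' k)),
    Finset.prod_congr rfl fun k _ => ev3_complete (h k) (h' k)]
  by_cases hh : h = h'
  · subst hh; simp [Finset.card_univ]
  · rw [if_neg hh]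
    obtain ⟨k, hk⟩ := Function.ne_iff.mp hh
    exact Finset.prod_eq_zero (Finset.mem_univ k) (if_neg hk)

noncomputable def four (f : (ι → Fin 3) → ℝ) (χ : ι → Fin 3) : ℂ :=
  ∑ h, (starRingEnd ℂ) (wv χ h) * (f h : ℂ)

lemma parseval (f : (ι → Fin 3) → ℝ) :
    ∑ χ : ι → Fin 3, Complex.normSq (four f χ)
      = 2 ^ Fintype.card ι * ∑ h, (f h) ^ 2 := by
  have key : (∑ χ : ι → Fin 3, (Complex.normSq (four f χ) : ℂ))
      = (2 : ℂ) ^ Fintype.card ι * ∑ h, ((f h : ℂ)) ^ 2 := by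
    have conjfour : ∀ χ : ι → Fin 3, (starRingEnd ℂ) (four f χ)
        = ∑ h', wv χ h' * (f h' : ℂ) := by
      intro χ
      rw [four, map_sum]
      exact Finset.sum_congr rfl fun h' _ => by
        rw [_root_.map_mul, Complex.conj_conj, Complex.conj_ofReal]
    calc ∑ χ : ι → Fin 3, (Complex.normSq (four f χ) : ℂ)
        = ∑ χ : ι → Fin 3, four f χ * (starRingEnd ℂ) (four f χ) :=
          Finset.sum_congr rfl fun χ _ => (Complex.mul_conj _).symm
      _ = ∑ χ : ι → Fin 3, ∑ h, ∑ h',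
            ((starRingEnd ℂ) (wv χ h) * (f h : ℂ)) * (wv χ h' * (f h' : ℂ)) := by
          refine Finset.sum_congr rfl fun χ _ => ?_
          rw [conjfour, four, Finset.sum_mul_sum]
      _ = ∑ h, ∑ h', ((f h : ℂ) * (f h' : ℂ)) *
            ∑ χ : ι → Fin 3, (starRingEnd ℂ) (wv χ h) * wv χ h' := by
          rw [Finset.sum_comm]
          refine Finset.sum_congr rfl fun h _ => ?_
          rw [Finset.sum_comm]
          refine Finset.sum_congr rfl fun h' _ => ?_
          rw [Finset.mul_sum]
          exact Finset.sum_congr rfl fun χ _ => by ring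
      _ = ∑ h, ((f h : ℂ) * (f h : ℂ)) * (2 : ℂ) ^ Fintype.card ι := by
          refine Finset.sum_congr rfl fun h _ => ?_
          rw [Finset.sum_congr rfl fun h' _ => by
            rw [wv_complete h h']]
          simp [mul_ite]
      _ = (2 : ℂ) ^ Fintype.card ι * ∑ h, ((f h : ℂ)) ^ 2 := by
          rw [Finset.mul_sum]
          exact Finset.sum_congr rfl fun h _ => by ring
  exact_mod_cast key

lemma flip3_flip3 (c : Fin 3) : flip3 (flip3 c) = c := by fin_cases c <;> rfl

lemma upd_invol (k : ι) : Function.Involutive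
    (fun h : ι → Fin 3 => Function.update h k (flip3 (h k))) := by
  intro h
  simp only [Function.update_self, Function.update_idem, flip3_flip3, Function.update_eq_self]

lemma wv_eigen (χ h : ι → Fin 3) (k : ι) :
    ((sgn3 (flip3 (h k)) : ℝ) : ℂ) * (starRingEnd ℂ) (wv χ (Function.update h k (flip3 (h k))))
      = Complex.I * ((lamsgn (χ k) : ℝ) : ℂ) * (starRingEnd ℂ) (wv χ h) := by
  rw [wv, wv,
    ← Finset.mul_prod_erase Finset.univ
      (fun n => ev3 (χ n) (Function.update h k (flip3 (h k)) n)) (Finset.mem_univ k),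
    ← Finset.mul_prod_erase Finset.univ (fun n => ev3 (χ n) (h n)) (Finset.mem_univ k),
    Finset.prod_congr rfl (fun n hn => by
      rw [Function.update_of_ne (Finset.ne_of_mem_erase hn)]),
    Function.update_self, _root_.map_mul, _root_.map_mul]
  linear_combination ((starRingEnd ℂ) (∏ n ∈ Finset.univ.erase k, ev3 (χ n) (h n))) *
    ev3_eigen (χ k) (h k)

lemma four_F (o' : ι → ℝ) (t : (ι → Fin 3) → ℝ) (χ : ι → Fin 3) :
    four (fun h => ∑ k, sgn3 (h k) * o' k * t (Function.update h k (flip3 (h k)))) χ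
      = Complex.I * ((∑ k, lamsgn (χ k) * o' k : ℝ) : ℂ) * four t χ := by
  rw [four]
  calc ∑ h : ι → Fin 3, (starRingEnd ℂ) (wv χ h) *
        ((∑ k, sgn3 (h k) * o' k * t (Function.update h k (flip3 (h k))) : ℝ) : ℂ)
      = ∑ h : ι → Fin 3, ∑ k, ((sgn3 (h k) : ℝ) : ℂ) * (o' k : ℂ) *
          ((starRingEnd ℂ) (wv χ h) * (t (Function.update h k (flip3 (h k))) : ℂ)) := by
        refine Finset.sum_congr rfl fun h _ => ?_
        push_cast
        rw [Finset.mul_sum]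
        exact Finset.sum_congr rfl fun k _ => by ring
    _ = ∑ k, ∑ h : ι → Fin 3, ((sgn3 (h k) : ℝ) : ℂ) * (o' k : ℂ) *
          ((starRingEnd ℂ) (wv χ h) * (t (Function.update h k (flip3 (h k))) : ℂ)) :=
        Finset.sum_comm
    _ = ∑ k, ∑ h : ι → Fin 3, ((sgn3 (flip3 (h k)) : ℝ) : ℂ) * (o' k : ℂ) *
          ((starRingEnd ℂ) (wv χ (Function.update h k (flip3 (h k)))) * (t h : ℂ)) := by
        refine Finset.sum_congr rfl fun k _ => ?_
        refine Fintype.sum_bijective _ (upd_invol k).bijective _ _ fun h => ?_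
        simp only [Function.update_self, Function.update_idem, flip3_flip3,
          Function.update_eq_self]
    _ = ∑ k, ∑ h : ι → Fin 3, Complex.I * ((lamsgn (χ k) : ℝ) : ℂ) * (o' k : ℂ) *
          ((starRingEnd ℂ) (wv χ h) * (t h : ℂ)) := by
        refine Finset.sum_congr rfl fun k _ => Finset.sum_congr rfl fun h _ => ?_
        linear_combination ((o' k : ℂ) * (t h : ℂ)) * wv_eigen χ h k
    _ = Complex.I * ((∑ k, lamsgn (χ k) * o' k : ℝ) : ℂ) * four t χ := by
        push_cast
        rw [four, mul_assoc, Finset.sum_mul, Finset.mul_sum]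
        refine Finset.sum_congr rfl fun k _ => ?_
        rw [Finset.mul_sum, Finset.mul_sum]
        exact Finset.sum_congr rfl fun h _ => by ring

lemma wv_eq_zero {χ h : ι → Fin 3} (hk : ∃ k, ¬(χ k = 2 ↔ h k = 2)) : wv χ h = 0 := by
  obtain ⟨k, hk⟩ := hk
  exact Finset.prod_eq_zero (Finset.mem_univ k) (ev3_eq_zero hk)

lemma exists_mismatch {χ h : ι → Fin 3}
    (hne : (Finset.univ.filter fun k => χ k = 2).card
      ≠ (Finset.univ.filter fun k => h k = 2).card) :
    ∃ k, ¬(χ k = 2 ↔ h k = 2) := by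
  by_contra hc
  push_neg at hc
  exact hne (by rw [Finset.filter_congr (fun k _ => hc k)])

lemma four_supported (t : (ι → Fin 3) → ℝ) (w : ℕ) (χ : ι → Fin 3) :
    four (fun h => if (Finset.univ.filter fun k => h k = 2).card = w then t h else 0) χ
      = if (Finset.univ.filter fun k => χ k = 2).card = w then four t χ else 0 := by
  by_cases hχ : (Finset.univ.filter fun k => χ k = 2).card = w
  · rw [if_pos hχ, four, four]
    refine Finset.sum_congr rfl fun h _ => ?_
    by_cases hh : (Finset.univ.filter fun k => h k = 2).card = w
    · rw [if_pos hh]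
    · rw [if_neg hh, wv_eq_zero (exists_mismatch (by rw [hχ]; exact fun c => hh c.symm))]
      simp
  · rw [if_neg hχ, four]
    apply Finset.sum_eq_zero
    intro h _
    by_cases hh : (Finset.univ.filter fun k => h k = 2).card = w
    · rw [wv_eq_zero (exists_mismatch (by rw [hh]; exact hχ))]
      simp
    · rw [if_neg hh]
      simp

lemma regroup (S : ℕ) (c : ℕ → ℝ) (v : (ι → Fin 3) → ℝ) :
    ∑ w ∈ Finset.range S, ∑ χ : ι → Fin 3,
        (if (Finset.univ.filter fun k => χ k = 2).card = w then c w * v χ else 0)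
      = ∑ χ : ι → Fin 3,
          (if (Finset.univ.filter fun k => χ k = 2).card < S then
            c ((Finset.univ.filter fun k => χ k = 2).card) * v χ else 0) := by
  rw [Finset.sum_comm]
  refine Finset.sum_congr rfl fun χ _ => ?_
  rw [Finset.sum_ite_eq (Finset.range S) ((Finset.univ.filter fun k => χ k = 2).card)
    (fun w => c w * v χ)]
  simp [Finset.mem_range]

lemma keyIneq (S : ℕ) (hcard : Fintype.card ι = S) (o' : ι → ℝ) (t : (ι → Fin 3) → ℝ)
    (Δ : ℕ → ℝ) (U : ℝ)
    (hΔ : ∀ χ : ι → Fin 3, (Finset.univ.filter fun k => χ k = 2).card < S →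
      Δ ((Finset.univ.filter fun k => χ k = 2).card) ≤ (∑ k, lamsgn (χ k) * o' k) ^ 2)
    (hU : ∀ χ : ι → Fin 3, (∑ k, lamsgn (χ k) * o' k) ^ 2 ≤ U) :
    ((∑ w ∈ Finset.range S, Δ w * ∑ h : ι → Fin 3,
        (if (Finset.univ.filter fun k => h k = 2).card = w then t h ^ 2 else 0))
      ≤ ∑ h : ι → Fin 3, (∑ k, sgn3 (h k) * o' k * t (Function.update h k (flip3 (h k)))) ^ 2)
    ∧ ((∑ h : ι → Fin 3, (∑ k, sgn3 (h k) * o' k * t (Function.update h k (flip3 (h k)))) ^ 2)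
      ≤ U * ∑ w ∈ Finset.range S, ∑ h : ι → Fin 3,
          (if (Finset.univ.filter fun k => h k = 2).card = w then t h ^ 2 else 0)) := by
  classical
  set cw : (ι → Fin 3) → ℕ := fun χ => (Finset.univ.filter fun k => χ k = 2).card with hcw
  set lam : (ι → Fin 3) → ℝ := fun χ => ∑ k, lamsgn (χ k) * o' k with hlam
  set nsq : (ι → Fin 3) → ℝ := fun χ => Complex.normSq (four t χ) with hnsq
  have hnsq0 : ∀ χ, 0 ≤ nsq χ := fun χ => Complex.normSq_nonneg _
  have hA : (2 : ℝ) ^ S * ∑ h : ι → Fin 3,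
      (∑ k, sgn3 (h k) * o' k * t (Function.update h k (flip3 (h k)))) ^ 2
      = ∑ χ : ι → Fin 3, (lam χ) ^ 2 * nsq χ := by
    rw [← hcard, ← parseval (fun h => ∑ k, sgn3 (h k) * o' k * t (Function.update h k (flip3 (h k))))]
    refine Finset.sum_congr rfl fun χ _ => ?_
    rw [four_F o' t χ, Complex.normSq_mul, Complex.normSq_mul, Complex.normSq_I,
      Complex.normSq_ofReal, hnsq, hlam]
    ring
  have hB : ∀ w : ℕ, (2 : ℝ) ^ S * ∑ h : ι → Fin 3,
      (if (Finset.univ.filter fun k => h k = 2).card = w then t h ^ 2 else 0)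
      = ∑ χ : ι → Fin 3, (if cw χ = w then nsq χ else 0) := by
    intro w
    have hp := parseval (fun h : ι → Fin 3 =>
      if (Finset.univ.filter fun k => h k = 2).card = w then t h else 0)
    rw [hcard] at hp
    have h1 : ∀ h : ι → Fin 3,
        (if (Finset.univ.filter fun k => h k = 2).card = w then t h else 0) ^ 2
        = (if (Finset.univ.filter fun k => h k = 2).card = w then t h ^ 2 else 0) := by
      intro h; split_ifs <;> simp
    rw [Finset.sum_congr rfl fun h _ => h1 h] at hp
    rw [← hp]
    refine Finset.sum_congr rfl fun χ _ => ?_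
    rw [four_supported t w χ, apply_ite Complex.normSq, Complex.normSq_zero, hnsq, hcw]
  have hcwle : ∀ χ : ι → Fin 3, cw χ ≤ S := by
    intro χ
    rw [hcw, ← hcard, ← Finset.card_univ]
    exact Finset.card_filter_le _ _
  have hlamS : ∀ χ : ι → Fin 3, cw χ = S → lam χ = 0 := by
    intro χ hχ
    have huniv : (Finset.univ.filter fun k => χ k = 2) = Finset.univ := by
      apply Finset.eq_univ_of_card
      rw [hcard]; exact hχ
    have : ∀ k : ι, χ k = 2 := by
      intro k
      have hmem : k ∈ Finset.univ.filter fun k => χ k = 2 := by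
        rw [huniv]; exact Finset.mem_univ k
      exact (Finset.mem_filter.mp hmem).2
    rw [hlam]
    apply Finset.sum_eq_zero
    intro k _
    rw [this k]
    simp [lamsgn]
  have hpow : (0 : ℝ) < 2 ^ S := by positivity
  constructor
  · rw [← mul_le_mul_iff_of_pos_left hpow, hA, Finset.mul_sum]
    calc ∑ w ∈ Finset.range S, (2:ℝ) ^ S * (Δ w * ∑ h : ι → Fin 3,
          (if (Finset.univ.filter fun k => h k = 2).card = w then t h ^ 2 else 0))
        = ∑ w ∈ Finset.range S, ∑ χ : ι → Fin 3, (if cw χ = w then Δ w * nsq χ else 0) := by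
          refine Finset.sum_congr rfl fun w _ => ?_
          rw [← mul_assoc, mul_comm ((2:ℝ)^S) (Δ w), mul_assoc, hB w, Finset.mul_sum]
          exact Finset.sum_congr rfl fun χ _ => by rw [mul_ite, mul_zero]
      _ = ∑ χ : ι → Fin 3, (if cw χ < S then Δ (cw χ) * nsq χ else 0) := regroup S Δ nsq
      _ ≤ ∑ χ : ι → Fin 3, (lam χ) ^ 2 * nsq χ := by
          refine Finset.sum_le_sum fun χ _ => ?_
          by_cases hc : cw χ < S
          · rw [if_pos hc]
            exact mul_le_mul_of_nonneg_right (hΔ χ hc) (hnsq0 χ)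
          · rw [if_neg hc]
            exact mul_nonneg (sq_nonneg _) (hnsq0 χ)
  · rw [← mul_le_mul_iff_of_pos_left hpow, hA]
    calc ∑ χ : ι → Fin 3, (lam χ) ^ 2 * nsq χ
        ≤ ∑ χ : ι → Fin 3, (if cw χ < S then U * nsq χ else 0) := by
          refine Finset.sum_le_sum fun χ _ => ?_
          by_cases hc : cw χ < S
          · rw [if_pos hc]
            exact mul_le_mul_of_nonneg_right (hU χ) (hnsq0 χ)
          · rw [if_neg hc]
            have : cw χ = S := le_antisymm (hcwle χ) (not_lt.mp hc)
            rw [hlamS χ this]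
            simp
      _ = ∑ w ∈ Finset.range S, ∑ χ : ι → Fin 3, (if cw χ = w then U * nsq χ else 0) :=
          (regroup S (fun _ => U) nsq).symm
      _ = (2:ℝ) ^ S * (U * ∑ w ∈ Finset.range S, ∑ h : ι → Fin 3,
            (if (Finset.univ.filter fun k => h k = 2).card = w then t h ^ 2 else 0)) := by
          rw [Finset.mul_sum, Finset.mul_sum]
          refine Finset.sum_congr rfl fun w _ => ?_
          rw [← mul_assoc, mul_comm ((2:ℝ)^S) U, mul_assoc, hB w, Finset.mul_sum]
          exact Finset.sum_congr rfl fun χ _ => by rw [mul_ite, mul_zero]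

end Fourier

lemma lamsgn_abs_le (c : Fin 3) : |lamsgn c| ≤ 1 := by
  fin_cases c <;> norm_num [lamsgn]

lemma lamsgn_abs (c : Fin 3) : |lamsgn c| = if c = 2 then 0 else 1 := by
  fin_cases c <;> simp [lamsgn, Fin.ext_iff] <;> norm_num

lemma lamsgn_cases (c : Fin 3) : lamsgn c = 0 ∨ lamsgn c = 1 ∨ lamsgn c = -1 := by
  fin_cases c <;> norm_num [lamsgn]

lemma lam_sq_le (N : ℕ) (o : Fin N → ℝ) (s : Finset (Fin N)) (χ : {q // q ∈ s} → Fin 3) :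
    (∑ k, lamsgn (χ k) * o k.val) ^ 2 ≤ (∑ k, |o k|) ^ 2 := by
  have h1 : |∑ k, lamsgn (χ k) * o k.val| ≤ ∑ k, |o k| := by
    calc |∑ k, lamsgn (χ k) * o k.val| ≤ ∑ k, |lamsgn (χ k) * o k.val| :=
          Finset.abs_sum_le_sum_abs _ _
      _ ≤ ∑ k : {q // q ∈ s}, |o k.val| := by
          refine Finset.sum_le_sum fun k _ => ?_
          rw [abs_mul]
          exact mul_le_of_le_one_left (abs_nonneg _) (lamsgn_abs_le _)
      _ = ∑ q ∈ s, |o q| := Finset.sum_coe_sort s (fun q => |o q|)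
      _ ≤ ∑ k, |o k| :=
          Finset.sum_le_sum_of_subset_of_nonneg (Finset.subset_univ s)
            (fun k _ _ => abs_nonneg _)
  calc (∑ k, lamsgn (χ k) * o k.val) ^ 2 = |∑ k, lamsgn (χ k) * o k.val| ^ 2 := (sq_abs _).symm
    _ ≤ (∑ k, |o k|) ^ 2 := pow_le_pow_left₀ (abs_nonneg _) h1 2

lemma deltaMin_bddBelow (N : ℕ) (o : Fin N → ℝ) :
    BddBelow {t : ℝ | ∃ g : Fin N → ℝ, (∀ i, g i = 0 ∨ g i = 1 ∨ g i = -1) ∧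
      1 ≤ ∑ i, |g i| ∧ ∑ i, |g i| ≤ ((j : ℕ) : ℝ) ∧ t = (∑ i, g i * o i) ^ 2} := by
  exact ⟨0, fun y hy => by obtain ⟨g, _, _, _, rfl⟩ := hy; positivity⟩

lemma deltaMin_le_lam_sq (N S : ℕ) (o : Fin N → ℝ) (s : Finset (Fin N)) (hs : s.card = S)
    (χ : {q // q ∈ s} → Fin 3)
    (hlt : (Finset.univ.filter fun k => χ k = 2).card < S) :
    deltaMin N o (S - (Finset.univ.filter fun k => χ k = 2).card)
      ≤ (∑ k, lamsgn (χ k) * o k.val) ^ 2 := by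
  classical
  set w := (Finset.univ.filter fun k => χ k = 2).card with hw
  set g : Fin N → ℝ := fun q => if hq : q ∈ s then lamsgn (χ ⟨q, hq⟩) else 0 with hg
  have hcardsub : Fintype.card {q // q ∈ s} = S := by rw [Fintype.card_coe, hs]
  have habs : ∀ k : {q // q ∈ s}, |lamsgn (χ k)| = if χ k = 2 then 0 else 1 :=
    fun k => lamsgn_abs (χ k)
  have hsum_abs : ∑ i, |g i| = ((S - w : ℕ) : ℝ) := by
    rw [← Finset.sum_subset (Finset.subset_univ s) (fun i _ hi => by
      rw [hg]; simp [dif_neg hi])]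
    rw [← Finset.sum_coe_sort s (fun i => |g i|)]
    have : ∀ k : {q // q ∈ s}, |g k.val| = if χ k = 2 then (0:ℝ) else 1 := by
      intro k
      rw [hg]
      simp only [dif_pos k.prop]
      exact habs k
    rw [Finset.sum_congr rfl fun k _ => this k]
    rw [Finset.sum_ite, Finset.sum_const, Finset.sum_const, smul_zero, zero_add, nsmul_eq_mul,
      mul_one]
    have : (Finset.univ.filter fun k : {q // q ∈ s} => ¬(χ k = 2)).card = S - w := by
      have h2 := Finset.card_filter_add_card_filter_not
        (s := (Finset.univ : Finset {q // q ∈ s})) (p := fun k => χ k = 2)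
      rw [Finset.card_univ, hcardsub] at h2
      omega
    rw [this]
  have hval : ∑ i, g i * o i = ∑ k : {q // q ∈ s}, lamsgn (χ k) * o k.val := by
    rw [← Finset.sum_subset (Finset.subset_univ s) (fun i _ hi => by
      rw [hg]; simp [dif_neg hi])]
    rw [← Finset.sum_coe_sort s (fun i => g i * o i)]
    refine Finset.sum_congr rfl fun k _ => ?_
    rw [hg]
    simp only [dif_pos k.prop]
  refine csInf_le (deltaMin_bddBelow N o) ?_
  refine ⟨g, ?_, ?_, ?_, ?_⟩
  · intro i
    rw [hg]
    by_cases hi : i ∈ s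
    · simp only [dif_pos hi]
      exact lamsgn_cases _
    · simp [dif_neg hi]
  · rw [hsum_abs]
    have : 1 ≤ S - w := by omega
    exact_mod_cast this
  · rw [hsum_abs]
  · rw [hval]

lemma quad_rearrange {α : Type*} {m : ℕ} (sfin : Finset α) (g : α → Fin m → ℝ)
    (x : Fin m → ℝ) :
    ∑ a : Fin m, ∑ a' : Fin m, x a * (∑ s ∈ sfin, g s a * g s a') * x a'
      = ∑ s ∈ sfin, (∑ a, x a * g s a) ^ 2 := by
  calc ∑ a : Fin m, ∑ a' : Fin m, x a * (∑ s ∈ sfin, g s a * g s a') * x a'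
      = ∑ a : Fin m, ∑ a' : Fin m, ∑ s ∈ sfin, (x a * g s a) * (x a' * g s a') := by
        refine Finset.sum_congr rfl fun a _ => Finset.sum_congr rfl fun a' _ => ?_
        simp only [Finset.mul_sum, Finset.sum_mul]
        exact Finset.sum_congr rfl fun s _ => by ring
    _ = ∑ a : Fin m, ∑ s ∈ sfin, ∑ a' : Fin m, (x a * g s a) * (x a' * g s a') := by
        exact Finset.sum_congr rfl fun a _ => Finset.sum_comm
    _ = ∑ s ∈ sfin, ∑ a : Fin m, ∑ a' : Fin m, (x a * g s a) * (x a' * g s a') :=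
        Finset.sum_comm
    _ = ∑ s ∈ sfin, (∑ a, x a * g s a) * (∑ a', x a' * g s a') := by
        refine Finset.sum_congr rfl fun s _ => ?_
        rw [Finset.sum_mul_sum]
    _ = ∑ s ∈ sfin, (∑ a, x a * g s a) ^ 2 :=
        Finset.sum_congr rfl fun s _ => (sq _).symm

lemma pull_const {m : ℕ} (c : ℝ) (G : Fin m → Fin m → ℝ) (x : Fin m → ℝ) :
    ∑ a : Fin m, ∑ a' : Fin m, x a * (c * G a a') * x a'
      = c * ∑ a : Fin m, ∑ a' : Fin m, x a * G a a' * x a' := by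
  rw [Finset.mul_sum]
  refine Finset.sum_congr rfl fun a _ => ?_
  rw [Finset.mul_sum]
  exact Finset.sum_congr rfl fun a' _ => by ring

lemma quadK (N S m : ℕ) (o : Fin N → ℝ) (Q : Finset (Finset (Fin N)))
    (ρ : Fin m → Matrix (Fin N → Fin 2) (Fin N → Fin 2) ℂ) (x : Fin m → ℝ) :
    ∑ a : Fin m, ∑ a' : Fin m, x a * asympQNTKxyz N S m o Q ρ a a' * x a'
      = (1 / ((3 : ℝ) ^ S * Q.card)) * ∑ s ∈ Q, ∑ h : {q // q ∈ s} → Fin 3,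
          (∑ k, sgn3 (h k) * o k.val *
            (∑ a, x a * (subsetPauliXYZ N s (Function.update h k (flip3 (h k))) * ρ a).trace.re)) ^ 2 := by
  classical
  simp only [asympQNTKxyz, Matrix.of_apply]
  rw [pull_const]
  congr 1
  have hsig : ∀ a a' : Fin m, (∑ s ∈ Q, ∑ h : {q // q ∈ s} → Fin 3, (1 / 4 : ℝ) *
      (((Complex.I • (zObservable N o * subsetPauliXYZ N s h
            - subsetPauliXYZ N s h * zObservable N o)) * ρ a).trace.re *
        ((Complex.I • (zObservable N o * subsetPauliXYZ N s h
            - subsetPauliXYZ N s h * zObservable N o)) * ρ a').trace.re))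
      = ∑ p ∈ Q.sigma (fun s => (Finset.univ : Finset ({q // q ∈ s} → Fin 3))),
          ((1/2) * ((Complex.I • (zObservable N o * subsetPauliXYZ N p.1 p.2
            - subsetPauliXYZ N p.1 p.2 * zObservable N o)) * ρ a).trace.re) *
          ((1/2) * ((Complex.I • (zObservable N o * subsetPauliXYZ N p.1 p.2
            - subsetPauliXYZ N p.1 p.2 * zObservable N o)) * ρ a').trace.re) := by
    intro a a'
    rw [Finset.sum_sigma]
    exact Finset.sum_congr rfl fun s _ => Finset.sum_congr rfl fun h _ => by ring
  rw [Finset.sum_congr rfl fun a _ => Finset.sum_congr rfl fun a' _ => by rw [hsig a a']]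
  rw [quad_rearrange]
  rw [Finset.sum_sigma]
  refine Finset.sum_congr rfl fun s _ => Finset.sum_congr rfl fun h _ => ?_
  congr 1
  calc ∑ a, x a * ((1/2) * ((Complex.I • (zObservable N o * subsetPauliXYZ N s h
            - subsetPauliXYZ N s h * zObservable N o)) * ρ a).trace.re)
      = ∑ a, x a * ((1/2) * ∑ k, 2 * sgn3 (h k) * o k.val *
          (subsetPauliXYZ N s (Function.update h k (flip3 (h k))) * ρ a).trace.re) := by
        refine Finset.sum_congr rfl fun a _ => ?_
        rw [trace_comm_re]
    _ = ∑ a, ∑ k, sgn3 (h k) * o k.val *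
          (x a * (subsetPauliXYZ N s (Function.update h k (flip3 (h k))) * ρ a).trace.re) := by
        refine Finset.sum_congr rfl fun a _ => ?_
        rw [Finset.mul_sum, Finset.mul_sum]
        exact Finset.sum_congr rfl fun k _ => by ring
    _ = ∑ k, ∑ a, sgn3 (h k) * o k.val *
          (x a * (subsetPauliXYZ N s (Function.update h k (flip3 (h k))) * ρ a).trace.re) :=
        Finset.sum_comm
    _ = ∑ k, sgn3 (h k) * o k.val *
          (∑ a, x a * (subsetPauliXYZ N s (Function.update h k (flip3 (h k))) * ρ a).trace.re) := by
        refine Finset.sum_congr rfl fun k _ => ?_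
        rw [Finset.mul_sum]

lemma quadG (N m : ℕ) (Q : Finset (Finset (Fin N))) (w : ℕ)
    (ρ : Fin m → Matrix (Fin N → Fin 2) (Fin N → Fin 2) ℂ) (x : Fin m → ℝ) :
    ∑ a : Fin m, ∑ a' : Fin m, x a * pauliGramW N m Q w ρ a a' * x a'
      = ∑ s ∈ Q, ∑ p : {q // q ∈ s} → Fin 3,
          (if (Finset.univ.filter fun q => p q = 2).card = w then
            (∑ a, x a * (subsetPauliXYZ N s p * ρ a).trace.re) ^ 2 else 0) := by
  classical
  simp only [pauliGramW, Matrix.of_apply]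
  have hsig : ∀ a a' : Fin m, (∑ s ∈ Q, ∑ p : {q // q ∈ s} → Fin 3,
      (if (Finset.univ.filter fun q => p q = 2).card = w then
        (subsetPauliXYZ N s p * ρ a).trace.re * (subsetPauliXYZ N s p * ρ a').trace.re
      else 0))
      = ∑ p ∈ Q.sigma (fun s => (Finset.univ : Finset ({q // q ∈ s} → Fin 3))),
          ((if (Finset.univ.filter fun q => p.2 q = 2).card = w then
            (subsetPauliXYZ N p.1 p.2 * ρ a).trace.re else 0) *
          (if (Finset.univ.filter fun q => p.2 q = 2).card = w then
            (subsetPauliXYZ N p.1 p.2 * ρ a').trace.re else 0)) := by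
    intro a a'
    rw [Finset.sum_sigma]
    refine Finset.sum_congr rfl fun s _ => Finset.sum_congr rfl fun p _ => ?_
    split_ifs <;> simp
  rw [Finset.sum_congr rfl fun a _ => Finset.sum_congr rfl fun a' _ => by rw [hsig a a']]
  rw [quad_rearrange]
  rw [Finset.sum_sigma]
  refine Finset.sum_congr rfl fun s _ => Finset.sum_congr rfl fun p _ => ?_
  by_cases hp : (Finset.univ.filter fun q => p q = 2).card = w
  · rw [if_pos hp]
    congr 1
    exact Finset.sum_congr rfl fun a _ => by rw [if_pos hp]
  · rw [if_neg hp]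
    have : ∀ a : Fin m, x a * (if (Finset.univ.filter fun q => p q = 2).card = w then
        (subsetPauliXYZ N s p * ρ a).trace.re else 0) = 0 := by
      intro a
      rw [if_neg hp, mul_zero]
    rw [Finset.sum_congr rfl fun a _ => this a]
    simp

noncomputable def KKaux (N S m : ℕ) (o : Fin N → ℝ) (Q : Finset (Finset (Fin N)))
    (ρ : Fin m → Matrix (Fin N → Fin 2) (Fin N → Fin 2) ℂ) (x : Fin m → ℝ) : ℝ :=
  ∑ s ∈ Q, ∑ h : {q // q ∈ s} → Fin 3,
    (∑ k, sgn3 (h k) * o k.val *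
      (∑ a, x a * (subsetPauliXYZ N s (Function.update h k (flip3 (h k))) * ρ a).trace.re)) ^ 2

noncomputable def GGaux (N m : ℕ) (Q : Finset (Finset (Fin N))) (w : ℕ)
    (ρ : Fin m → Matrix (Fin N → Fin 2) (Fin N → Fin 2) ℂ) (x : Fin m → ℝ) : ℝ :=
  ∑ s ∈ Q, ∑ p : {q // q ∈ s} → Fin 3,
    (if (Finset.univ.filter fun q => p q = 2).card = w then
      (∑ a, x a * (subsetPauliXYZ N s p * ρ a).trace.re) ^ 2 else 0)

lemma perS (N S m : ℕ) (o : Fin N → ℝ) (s : Finset (Fin N)) (hs : s.card = S)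
    (ρ : Fin m → Matrix (Fin N → Fin 2) (Fin N → Fin 2) ℂ) (x : Fin m → ℝ) :
    ((∑ w ∈ Finset.range S, deltaMin N o (S - w) * ∑ h : {q // q ∈ s} → Fin 3,
        (if (Finset.univ.filter fun k => h k = 2).card = w then
          (∑ a, x a * (subsetPauliXYZ N s h * ρ a).trace.re) ^ 2 else 0))
      ≤ ∑ h : {q // q ∈ s} → Fin 3, (∑ k, sgn3 (h k) * o k.val *
          (∑ a, x a * (subsetPauliXYZ N s (Function.update h k (flip3 (h k))) * ρ a).trace.re)) ^ 2)
    ∧ ((∑ h : {q // q ∈ s} → Fin 3, (∑ k, sgn3 (h k) * o k.val *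
          (∑ a, x a * (subsetPauliXYZ N s (Function.update h k (flip3 (h k))) * ρ a).trace.re)) ^ 2)
      ≤ (∑ k, |o k|) ^ 2 * ∑ w ∈ Finset.range S, ∑ h : {q // q ∈ s} → Fin 3,
          (if (Finset.univ.filter fun k => h k = 2).card = w then
            (∑ a, x a * (subsetPauliXYZ N s h * ρ a).trace.re) ^ 2 else 0)) := by
  exact keyIneq S (by rw [Fintype.card_coe, hs]) (fun k => o k.val)
    (fun p => ∑ a, x a * (subsetPauliXYZ N s p * ρ a).trace.re)
    (fun w => deltaMin N o (S - w)) ((∑ k, |o k|) ^ 2)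
    (fun χ hlt => deltaMin_le_lam_sq N S o s hs χ hlt)
    (fun χ => lam_sq_le N o s χ)

lemma low_sum (N S m : ℕ) (o : Fin N → ℝ) (Q : Finset (Finset (Fin N)))
    (hQcard : ∀ s ∈ Q, s.card = S)
    (ρ : Fin m → Matrix (Fin N → Fin 2) (Fin N → Fin 2) ℂ) (x : Fin m → ℝ) :
    ∑ w ∈ Finset.range S, deltaMin N o (S - w) * GGaux N m Q w ρ x
      ≤ KKaux N S m o Q ρ x := by
  calc ∑ w ∈ Finset.range S, deltaMin N o (S - w) * GGaux N m Q w ρ x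
      = ∑ s ∈ Q, ∑ w ∈ Finset.range S, deltaMin N o (S - w) * ∑ h : {q // q ∈ s} → Fin 3,
          (if (Finset.univ.filter fun k => h k = 2).card = w then
            (∑ a, x a * (subsetPauliXYZ N s h * ρ a).trace.re) ^ 2 else 0) := by
        rw [Finset.sum_comm]
        refine Finset.sum_congr rfl fun w _ => ?_
        rw [GGaux, Finset.mul_sum]
    _ ≤ ∑ s ∈ Q, ∑ h : {q // q ∈ s} → Fin 3, (∑ k, sgn3 (h k) * o k.val *
          (∑ a, x a * (subsetPauliXYZ N s (Function.update h k (flip3 (h k))) * ρ a).trace.re)) ^ 2 :=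
        Finset.sum_le_sum fun s hs => (perS N S m o s (hQcard s hs) ρ x).1
    _ = KKaux N S m o Q ρ x := rfl

lemma up_sum (N S m : ℕ) (o : Fin N → ℝ) (Q : Finset (Finset (Fin N)))
    (hQcard : ∀ s ∈ Q, s.card = S)
    (ρ : Fin m → Matrix (Fin N → Fin 2) (Fin N → Fin 2) ℂ) (x : Fin m → ℝ) :
    KKaux N S m o Q ρ x
      ≤ ∑ w ∈ Finset.range S, (∑ k, |o k|) ^ 2 * GGaux N m Q w ρ x := by
  calc KKaux N S m o Q ρ x
      ≤ ∑ s ∈ Q, (∑ k, |o k|) ^ 2 * ∑ w ∈ Finset.range S, ∑ h : {q // q ∈ s} → Fin 3,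
          (if (Finset.univ.filter fun k => h k = 2).card = w then
            (∑ a, x a * (subsetPauliXYZ N s h * ρ a).trace.re) ^ 2 else 0) :=
        Finset.sum_le_sum fun s hs => (perS N S m o s (hQcard s hs) ρ x).2
    _ = ∑ s ∈ Q, ∑ w ∈ Finset.range S, (∑ k, |o k|) ^ 2 * ∑ h : {q // q ∈ s} → Fin 3,
          (if (Finset.univ.filter fun k => h k = 2).card = w then
            (∑ a, x a * (subsetPauliXYZ N s h * ρ a).trace.re) ^ 2 else 0) :=
        Finset.sum_congr rfl fun s _ => Finset.mul_sum _ _ _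
    _ = ∑ w ∈ Finset.range S, (∑ k, |o k|) ^ 2 * GGaux N m Q w ρ x := by
        rw [Finset.sum_comm]
        refine Finset.sum_congr rfl fun w _ => ?_
        rw [GGaux, Finset.mul_sum]

/-- **Loewner bounds for the asymptotic QNTK with `{X,Y,Z}^{⊗S}` gate Hamiltonians.**
For trace-one Hermitian states `ρ₁, …, ρ_m`,
`(1/(3^S|Q|))·Σ_w (Σ_k|o_k|)²·A_{Q,w}ᵀA_{Q,w} ≽ K_∞
   ≽ (1/(3^S|Q|))·Σ_w Δ_{S−w}·A_{Q,w}ᵀA_{Q,w}`. -/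
theorem asympQNTKxyz_loewner_bounds (N S m : ℕ) (hS : 1 ≤ S) (hSN : S ≤ N)
    (o : Fin N → ℝ) (Q : Finset (Finset (Fin N))) (hQ : Q.Nonempty)
    (hQcard : ∀ s ∈ Q, s.card = S)
    (ρ : Fin m → Matrix (Fin N → Fin 2) (Fin N → Fin 2) ℂ)
    (hherm : ∀ a, (ρ a).IsHermitian) (htr : ∀ a, (ρ a).trace = 1) :
    (((1 / ((3 : ℝ) ^ S * Q.card)) •
          ∑ w ∈ Finset.range S, ((∑ k, |o k|) ^ 2) • pauliGramW N m Q w ρ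
        - asympQNTKxyz N S m o Q ρ).PosSemidef)
    ∧ ((asympQNTKxyz N S m o Q ρ
        - (1 / ((3 : ℝ) ^ S * Q.card)) •
            ∑ w ∈ Finset.range S, deltaMin N o (S - w) • pauliGramW N m Q w ρ).PosSemidef) := by
  classical
  have hc0 : (0:ℝ) ≤ 1 / ((3 : ℝ) ^ S * Q.card) := by positivity
  have quad_eq : ∀ (M : Matrix (Fin m) (Fin m) ℝ) (x : Fin m → ℝ),
      star x ⬝ᵥ M.mulVec x = ∑ a, ∑ a', x a * M a a' * x a' := by
    intro M x
    simp [dotProduct, Matrix.mulVec, Finset.mul_sum, mul_assoc]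
  have mkHerm : ∀ M : Matrix (Fin m) (Fin m) ℝ, (∀ a b, M b a = M a b) → M.IsHermitian :=
    fun M hM => Matrix.ext fun a b => by rw [Matrix.conjTranspose_apply, star_trivial, hM]
  have hKsym : ∀ a b, asympQNTKxyz N S m o Q ρ b a = asympQNTKxyz N S m o Q ρ a b := by
    intro a b
    simp only [asympQNTKxyz, Matrix.of_apply]
    congr 1
    exact Finset.sum_congr rfl fun s _ => Finset.sum_congr rfl fun h _ => by ring
  have hGsym : ∀ w a b, pauliGramW N m Q w ρ b a = pauliGramW N m Q w ρ a b := by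
    intro w a b
    simp only [pauliGramW, Matrix.of_apply]
    refine Finset.sum_congr rfl fun s _ => Finset.sum_congr rfl fun p _ => ?_
    split_ifs <;> ring
  have hquadcoef : ∀ (d : ℕ → ℝ) (x : Fin m → ℝ),
      ∑ a, ∑ a', x a * (∑ w ∈ Finset.range S, d w * pauliGramW N m Q w ρ a a') * x a'
        = ∑ w ∈ Finset.range S, d w * GGaux N m Q w ρ x := by
    intro d x
    calc ∑ a, ∑ a', x a * (∑ w ∈ Finset.range S, d w * pauliGramW N m Q w ρ a a') * x a'
        = ∑ a, ∑ a', ∑ w ∈ Finset.range S, x a * (d w * pauliGramW N m Q w ρ a a') * x a' := by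
          refine Finset.sum_congr rfl fun a _ => Finset.sum_congr rfl fun a' _ => ?_
          rw [Finset.mul_sum, Finset.sum_mul]
      _ = ∑ a : Fin m, ∑ w ∈ Finset.range S, ∑ a' : Fin m,
            x a * (d w * pauliGramW N m Q w ρ a a') * x a' :=
          Finset.sum_congr rfl fun a _ => Finset.sum_comm
      _ = ∑ w ∈ Finset.range S, ∑ a, ∑ a', x a * (d w * pauliGramW N m Q w ρ a a') * x a' :=
          Finset.sum_comm
      _ = ∑ w ∈ Finset.range S, d w * GGaux N m Q w ρ x := by
          refine Finset.sum_congr rfl fun w _ => ?_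
          rw [pull_const (d w) (pauliGramW N m Q w ρ) x, quadG N m Q w ρ x]
          rfl
  have hquadK : ∀ x : Fin m → ℝ,
      ∑ a, ∑ a', x a * asympQNTKxyz N S m o Q ρ a a' * x a'
        = (1 / ((3 : ℝ) ^ S * Q.card)) * KKaux N S m o Q ρ x := by
    intro x
    rw [quadK N S m o Q ρ x]
    rfl
  constructor
  · have hentry : ∀ a a', ((1 / ((3 : ℝ) ^ S * Q.card)) •
        ∑ w ∈ Finset.range S, ((∑ k, |o k|) ^ 2) • pauliGramW N m Q w ρ
        - asympQNTKxyz N S m o Q ρ) a a'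
        = (1 / ((3 : ℝ) ^ S * Q.card)) *
            (∑ w ∈ Finset.range S, ((∑ k, |o k|) ^ 2) * pauliGramW N m Q w ρ a a')
          - asympQNTKxyz N S m o Q ρ a a' := by
      intro a a'
      simp [Matrix.sub_apply, Matrix.smul_apply, Matrix.sum_apply, smul_eq_mul]
    refine Matrix.PosSemidef.of_dotProduct_mulVec_nonneg ?_ ?_
    · apply mkHerm
      intro a b
      rw [hentry b a, hentry a b, hKsym a b,
        Finset.sum_congr rfl fun w (_ : w ∈ Finset.range S) => by rw [hGsym w a b]]
    · intro x
      rw [quad_eq]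
      have hsplit : ∑ a, ∑ a', x a * ((1 / ((3 : ℝ) ^ S * Q.card)) •
          ∑ w ∈ Finset.range S, ((∑ k, |o k|) ^ 2) • pauliGramW N m Q w ρ
          - asympQNTKxyz N S m o Q ρ) a a' * x a'
          = (1 / ((3 : ℝ) ^ S * Q.card)) *
              (∑ w ∈ Finset.range S, ((∑ k, |o k|) ^ 2) * GGaux N m Q w ρ x)
            - (1 / ((3 : ℝ) ^ S * Q.card)) * KKaux N S m o Q ρ x := by
        calc ∑ a, ∑ a', x a * ((1 / ((3 : ℝ) ^ S * Q.card)) •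
            ∑ w ∈ Finset.range S, ((∑ k, |o k|) ^ 2) • pauliGramW N m Q w ρ
            - asympQNTKxyz N S m o Q ρ) a a' * x a'
            = ∑ a, ∑ a', (x a * ((1 / ((3 : ℝ) ^ S * Q.card)) *
                (∑ w ∈ Finset.range S, ((∑ k, |o k|) ^ 2) * pauliGramW N m Q w ρ a a')) * x a'
              - x a * asympQNTKxyz N S m o Q ρ a a' * x a') := by
              refine Finset.sum_congr rfl fun a _ => Finset.sum_congr rfl fun a' _ => ?_
              rw [hentry a a']
              ring
          _ = (∑ a, ∑ a', x a * ((1 / ((3 : ℝ) ^ S * Q.card)) *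
                (∑ w ∈ Finset.range S, ((∑ k, |o k|) ^ 2) * pauliGramW N m Q w ρ a a')) * x a')
              - ∑ a, ∑ a', x a * asympQNTKxyz N S m o Q ρ a a' * x a' := by
              rw [← Finset.sum_sub_distrib]
              exact Finset.sum_congr rfl fun a _ => Finset.sum_sub_distrib _ _
          _ = (1 / ((3 : ℝ) ^ S * Q.card)) *
              (∑ w ∈ Finset.range S, ((∑ k, |o k|) ^ 2) * GGaux N m Q w ρ x)
            - (1 / ((3 : ℝ) ^ S * Q.card)) * KKaux N S m o Q ρ x := by
              rw [pull_const, hquadcoef (fun _ => (∑ k, |o k|) ^ 2) x, hquadK x]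
      rw [hsplit, ← mul_sub]
      exact mul_nonneg hc0 (sub_nonneg.mpr (up_sum N S m o Q hQcard ρ x))
  · have hentry : ∀ a a', (asympQNTKxyz N S m o Q ρ
        - (1 / ((3 : ℝ) ^ S * Q.card)) •
            ∑ w ∈ Finset.range S, deltaMin N o (S - w) • pauliGramW N m Q w ρ) a a'
        = asympQNTKxyz N S m o Q ρ a a'
          - (1 / ((3 : ℝ) ^ S * Q.card)) *
              (∑ w ∈ Finset.range S, deltaMin N o (S - w) * pauliGramW N m Q w ρ a a') := by
      intro a a'
      simp [Matrix.sub_apply, Matrix.smul_apply, Matrix.sum_apply, smul_eq_mul]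
    refine Matrix.PosSemidef.of_dotProduct_mulVec_nonneg ?_ ?_
    · apply mkHerm
      intro a b
      rw [hentry b a, hentry a b, hKsym a b,
        Finset.sum_congr rfl fun w (_ : w ∈ Finset.range S) => by rw [hGsym w a b]]
    · intro x
      rw [quad_eq]
      have hsplit : ∑ a, ∑ a', x a * (asympQNTKxyz N S m o Q ρ
          - (1 / ((3 : ℝ) ^ S * Q.card)) •
              ∑ w ∈ Finset.range S, deltaMin N o (S - w) • pauliGramW N m Q w ρ) a a' * x a'
          = (1 / ((3 : ℝ) ^ S * Q.card)) * KKaux N S m o Q ρ x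
            - (1 / ((3 : ℝ) ^ S * Q.card)) *
                (∑ w ∈ Finset.range S, deltaMin N o (S - w) * GGaux N m Q w ρ x) := by
        calc ∑ a, ∑ a', x a * (asympQNTKxyz N S m o Q ρ
            - (1 / ((3 : ℝ) ^ S * Q.card)) •
                ∑ w ∈ Finset.range S, deltaMin N o (S - w) • pauliGramW N m Q w ρ) a a' * x a'
            = ∑ a, ∑ a', (x a * asympQNTKxyz N S m o Q ρ a a' * x a'
              - x a * ((1 / ((3 : ℝ) ^ S * Q.card)) *
                (∑ w ∈ Finset.range S, deltaMin N o (S - w) * pauliGramW N m Q w ρ a a')) * x a') := by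
              refine Finset.sum_congr rfl fun a _ => Finset.sum_congr rfl fun a' _ => ?_
              rw [hentry a a']
              ring
          _ = (∑ a, ∑ a', x a * asympQNTKxyz N S m o Q ρ a a' * x a')
              - ∑ a, ∑ a', x a * ((1 / ((3 : ℝ) ^ S * Q.card)) *
                (∑ w ∈ Finset.range S, deltaMin N o (S - w) * pauliGramW N m Q w ρ a a')) * x a' := by
              rw [← Finset.sum_sub_distrib]
              exact Finset.sum_congr rfl fun a _ => Finset.sum_sub_distrib _ _
          _ = (1 / ((3 : ℝ) ^ S * Q.card)) * KKaux N S m o Q ρ x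
            - (1 / ((3 : ℝ) ^ S * Q.card)) *
                (∑ w ∈ Finset.range S, deltaMin N o (S - w) * GGaux N m Q w ρ x) := by
              rw [pull_const, hquadcoef (fun w => deltaMin N o (S - w)) x, hquadK x]
      rw [hsplit, ← mul_sub]
      exact mul_nonneg hc0 (sub_nonneg.mpr (low_sum N S m o Q hQcard ρ x))
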